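/- Let p be a prime and A a commutative ring of characteristic p. The map sending x ∈ 𝕎(Ring.Perfection A p) to the sequence n ↦ (WittVector.map (Perfection.coeff A p n)) x is a bijection from 𝕎(Ring.Perfection A p) onto the set {y : ℕ → 𝕎 A | ∀ n, frobenius (y (n+1)) = y n}. -/

import Mathlib

open WittVector

/-- For a ring `A` of characteristic `p`, the map `𝕎 (Perfection A p) → (ℕ → 𝕎 A)`,
`x ↦ (n ↦ 𝕎(coeff n) x)`, is a bijection onto the set of Frobenius-compatible sequences. -/
theorem wittVector_perfection_bijOn (p : ℕ) [Fact p.Prime] (A : Type*) [CommRing A]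
    [CharP A p] :
    Set.BijOn
      (fun (x : WittVector p (Ring.Perfection A p)) (n : ℕ) =>
        WittVector.map (Perfection.coeff A p n) x)
      Set.univ
      {y : ℕ → WittVector p A | ∀ n, WittVector.frobenius (y (n + 1)) = y n} := by
  refine ⟨fun (x : WittVector p (Perfection A p)) _ n => ?_,
    fun (x : WittVector p (Perfection A p)) _ (y : WittVector p (Perfection A p)) _ h => ?_,
    fun y hy => ?_⟩
  · ext k
    beta_reduce
    rw [coeff_frobenius_charP, map_coeff, map_coeff,
      Perfection.coeff_pow_p']
  · ext k n
    have := congrArg (fun z => WittVector.coeff z k) (congrFun h n)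
    simpa only [map_coeff] using this
  · refine ⟨(WittVector.mk p fun k => ⟨fun n => (y n).coeff k, fun n => ?_⟩ :
      WittVector p (Perfection A p)), trivial, ?_⟩
    · have := congrArg (fun z => WittVector.coeff z k) (hy n)
      simpa only [coeff_frobenius_charP] using this
    · funext n
      ext k
      simp [map_coeff, WittVector.coeff_mk]
      rfl
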